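/- Let X and Y be measurable spaces, let κ be a Markov kernel from X to Y, let μ be a probability measure on X, and let h ∈ L²(X, μ). Define the probability measure μ′ on Y by μ′(B) = ∫_X κ(x)(B) dμ(x) and the finite signed measure ν′ on Y by ν′(B) = ∫_X κ(x)(B) h(x) dμ(x). Then ν′ is absolutely continuous with respect to μ′, its Radon–Nikodym derivative g = dν′/dμ′ lies in L²(Y, μ′), and ∫_Y g² dμ′ ≤ ∫_X h² dμ. -/

import Mathlib

open MeasureTheory ProbabilityTheory Set Filter
open scoped NNReal ENNReal

section Aux

variable {X Y : Type*} [MeasurableSpace X] [MeasurableSpace Y]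

lemma auxFM_integrable_of_bdd {ρ : Measure Y} [IsFiniteMeasure ρ] {φ : Y → ℝ}
    (hφ : AEStronglyMeasurable φ ρ) {C : ℝ} (hC : ∀ y, |φ y| ≤ C) : Integrable φ ρ :=
  (integrable_const C).mono' hφ (Eventually.of_forall fun y => by
    simpa [Real.norm_eq_abs] using hC y)

lemma auxFM_bind_univ (κ : Kernel X Y) [IsMarkovKernel κ] (θ : Measure X) :
    (θ.bind (fun x => κ x)) Set.univ = θ Set.univ := by
  rw [Measure.bind_apply MeasurableSet.univ κ.measurable.aemeasurable]; simp

lemma auxFM_isFiniteMeasure_bind (κ : Kernel X Y) [IsMarkovKernel κ] (θ : Measure X)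
    [IsFiniteMeasure θ] : IsFiniteMeasure (θ.bind (fun x => κ x)) :=
  ⟨by rw [auxFM_bind_univ]; exact measure_lt_top θ _⟩

lemma auxFM_isProbabilityMeasure_bind (κ : Kernel X Y) [IsMarkovKernel κ] (θ : Measure X)
    [IsProbabilityMeasure θ] : IsProbabilityMeasure (θ.bind (fun x => κ x)) :=
  ⟨by rw [auxFM_bind_univ]; exact measure_univ⟩

lemma auxFM_measurable_kernel_integral (κ : Kernel X Y) [IsMarkovKernel κ] {φ : Y → ℝ}
    (hφ : Measurable φ) : Measurable fun x => ∫ y, φ y ∂(κ x) :=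
  (StronglyMeasurable.integral_kernel_prod_right'
    (f := fun p : X × Y => φ p.2) (hφ.comp measurable_snd).stronglyMeasurable).measurable

lemma auxFM_integral_bind_nonneg (κ : Kernel X Y) [IsMarkovKernel κ] (θ : Measure X)
    [IsFiniteMeasure θ] {ψ : Y → ℝ} (hψ : Measurable ψ) (hψ0 : ∀ y, 0 ≤ ψ y) {C : ℝ}
    (hC : ∀ y, ψ y ≤ C) :
    ∫ y, ψ y ∂(θ.bind (fun x => κ x)) = ∫ x, ∫ y, ψ y ∂(κ x) ∂θ := by
  have hmeasF : Measurable fun x => ∫⁻ y, ENNReal.ofReal (ψ y) ∂(κ x) :=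
    Measurable.lintegral_kernel hψ.ennreal_ofReal
  have hFle : ∀ x, ∫⁻ y, ENNReal.ofReal (ψ y) ∂(κ x) ≤ ENNReal.ofReal C := fun x => by
    calc ∫⁻ y, ENNReal.ofReal (ψ y) ∂(κ x) ≤ ∫⁻ _, ENNReal.ofReal C ∂(κ x) :=
          lintegral_mono fun y => ENNReal.ofReal_le_ofReal (hC y)
      _ = ENNReal.ofReal C := by simp
  rw [integral_eq_lintegral_of_nonneg_ae (Eventually.of_forall hψ0) hψ.aestronglyMeasurable,
    Measure.lintegral_bind κ.measurable.aemeasurable hψ.ennreal_ofReal.aemeasurable]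
  have h1 : ∀ x, ∫ y, ψ y ∂(κ x) = (∫⁻ y, ENNReal.ofReal (ψ y) ∂(κ x)).toReal := fun x =>
    integral_eq_lintegral_of_nonneg_ae (Eventually.of_forall hψ0) hψ.aestronglyMeasurable
  rw [integral_congr_ae (Eventually.of_forall h1),
    integral_toReal hmeasF.aemeasurable
      (Eventually.of_forall fun x => lt_of_le_of_lt (hFle x) ENNReal.ofReal_lt_top)]

lemma auxFM_integral_bind (κ : Kernel X Y) [IsMarkovKernel κ] (θ : Measure X)
    [IsFiniteMeasure θ] {φ : Y → ℝ} (hφ : Measurable φ) {C : ℝ} (hC : ∀ y, |φ y| ≤ C) :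
    ∫ y, φ y ∂(θ.bind (fun x => κ x)) = ∫ x, ∫ y, φ y ∂(κ x) ∂θ := by
  haveI := auxFM_isFiniteMeasure_bind κ θ
  have hp : Measurable fun y => max (φ y) 0 := hφ.max measurable_const
  have hm : Measurable fun y => max (-φ y) 0 := hφ.neg.max measurable_const
  have hCp : ∀ y, max (φ y) 0 ≤ max C 0 := fun y => max_le_max (abs_le.1 (hC y)).2 le_rfl
  have hCm : ∀ y, max (-φ y) 0 ≤ max C 0 := fun y =>
    max_le_max ((neg_le_abs _).trans (hC y)) le_rfl
  have habsp : ∀ y, |max (φ y) 0| ≤ max C 0 := fun y => by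
    rw [abs_of_nonneg (le_max_right _ _)]; exact hCp y
  have habsm : ∀ y, |max (-φ y) 0| ≤ max C 0 := fun y => by
    rw [abs_of_nonneg (le_max_right _ _)]; exact hCm y
  have hsplit : ∀ y, φ y = max (φ y) 0 - max (-φ y) 0 := fun y => by
    rcases le_total 0 (φ y) with h | h
    · rw [max_eq_left h, max_eq_right (by linarith)]; ring
    · rw [max_eq_right h, max_eq_left (by linarith)]; ring
  calc ∫ y, φ y ∂(θ.bind (fun x => κ x))
      = ∫ y, (max (φ y) 0 - max (-φ y) 0) ∂(θ.bind (fun x => κ x)) := by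
        exact integral_congr_ae (Eventually.of_forall fun y => hsplit y)
    _ = (∫ y, max (φ y) 0 ∂(θ.bind (fun x => κ x)))
        - ∫ y, max (-φ y) 0 ∂(θ.bind (fun x => κ x)) :=
        integral_sub (auxFM_integrable_of_bdd hp.aestronglyMeasurable habsp)
          (auxFM_integrable_of_bdd hm.aestronglyMeasurable habsm)
    _ = (∫ x, ∫ y, max (φ y) 0 ∂(κ x) ∂θ) - ∫ x, ∫ y, max (-φ y) 0 ∂(κ x) ∂θ := by
        rw [auxFM_integral_bind_nonneg κ θ hp (fun y => le_max_right _ _) hCp,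
          auxFM_integral_bind_nonneg κ θ hm (fun y => le_max_right _ _) hCm]
    _ = ∫ x, ((∫ y, max (φ y) 0 ∂(κ x)) - ∫ y, max (-φ y) 0 ∂(κ x)) ∂θ := by
        have hip : Integrable (fun x => ∫ y, max (φ y) 0 ∂(κ x)) θ := by
          refine auxFM_integrable_of_bdd
            (auxFM_measurable_kernel_integral κ hp).aestronglyMeasurable (C := max C 0)
            (fun x => ?_)
          have hnn : (0:ℝ) ≤ ∫ y, max (φ y) 0 ∂(κ x) :=
            integral_nonneg fun y => le_max_right _ _
          rw [abs_of_nonneg hnn]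
          calc ∫ y, max (φ y) 0 ∂(κ x) ≤ ∫ _, max C 0 ∂(κ x) :=
                integral_mono (auxFM_integrable_of_bdd hp.aestronglyMeasurable habsp)
                  (integrable_const _) hCp
            _ = max C 0 := by simp
        have him : Integrable (fun x => ∫ y, max (-φ y) 0 ∂(κ x)) θ := by
          refine auxFM_integrable_of_bdd
            (auxFM_measurable_kernel_integral κ hm).aestronglyMeasurable (C := max C 0)
            (fun x => ?_)
          have hnn : (0:ℝ) ≤ ∫ y, max (-φ y) 0 ∂(κ x) :=
            integral_nonneg fun y => le_max_right _ _
          rw [abs_of_nonneg hnn]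
          calc ∫ y, max (-φ y) 0 ∂(κ x) ≤ ∫ _, max C 0 ∂(κ x) :=
                integral_mono (auxFM_integrable_of_bdd hm.aestronglyMeasurable habsm)
                  (integrable_const _) hCm
            _ = max C 0 := by simp
        rw [integral_sub hip him]
    _ = ∫ x, ∫ y, φ y ∂(κ x) ∂θ := by
        refine integral_congr_ae (Eventually.of_forall fun x => ?_)
        dsimp only
        rw [← integral_sub (auxFM_integrable_of_bdd hp.aestronglyMeasurable habsp)
          (auxFM_integrable_of_bdd hm.aestronglyMeasurable habsm)]
        exact integral_congr_ae (Eventually.of_forall fun y => (hsplit y).symm)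

lemma auxFM_jensen {ν : Measure Y} [IsProbabilityMeasure ν] {f : Y → ℝ} (hf : Measurable f)
    {C : ℝ} (hC : ∀ y, |f y| ≤ C) : (∫ y, f y ∂ν) ^ 2 ≤ ∫ y, f y ^ 2 ∂ν := by
  have h1 : Integrable f ν := auxFM_integrable_of_bdd hf.aestronglyMeasurable hC
  have h2 : Integrable (fun y => f y ^ 2) ν :=
    auxFM_integrable_of_bdd (hf.pow_const 2).aestronglyMeasurable (C := C ^ 2) fun y => by
      rw [abs_pow]; exact pow_le_pow_left₀ (abs_nonneg _) (hC y) 2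
  set c := ∫ y, f y ∂ν with hc
  have hexp : ∀ y, (f y - c) ^ 2 = (f y ^ 2 - (2 * c) * f y) + c ^ 2 := fun y => by ring
  have h0 : 0 ≤ ∫ y, (f y - c) ^ 2 ∂ν := integral_nonneg fun y => sq_nonneg _
  have hsub : Integrable (fun y => f y ^ 2 - 2 * c * f y) ν := h2.sub (h1.const_mul (2 * c))
  have heq : ∫ y, (f y - c) ^ 2 ∂ν = (∫ y, f y ^ 2 ∂ν) - c ^ 2 := by
    rw [integral_congr_ae (Eventually.of_forall hexp),
      integral_add hsub (integrable_const _),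
      integral_sub h2 (h1.const_mul _), integral_const_mul, integral_const, probReal_univ]
    simp [← hc]
    ring
  linarith

end Aux

set_option maxHeartbeats 1000000 in
/-- Monotonicity of the Fisher metric under probabilistic morphisms: let `κ` be a Markov
kernel from `X` to `Y`, `μ` a probability measure on `X`, and `h ∈ L²(X, μ)`. Let
`μ' = T_*μ` be the probability measure `B ↦ ∫ κ x B dμ` (i.e. `μ.bind κ`), and let `ν'` be
the finite signed measure `B ↦ ∫ κ x B · h x dμ` (i.e. `T_*(h μ)`). Then `ν' ≪ μ'`, its
Radon–Nikodym derivative `g = dν'/dμ'` lies in `L²(Y, μ')`, and `∫ g² dμ' ≤ ∫ h² dμ`. -/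
theorem fisher_metric_monotone_under_markov_kernel
    {X Y : Type*} [MeasurableSpace X] [MeasurableSpace Y]
    (κ : Kernel X Y) [IsMarkovKernel κ]
    (μ : Measure X) [IsProbabilityMeasure μ]
    (h : X → ℝ) (hmeas : Measurable h) (hL2 : MemLp h 2 μ)
    (ν' : SignedMeasure Y)
    (hν' : ∀ B : Set Y, MeasurableSet B →
      ν' B = ∫ x, ((κ x) B).toReal * h x ∂μ) :
    ν' ≪ᵥ (μ.bind (fun x => κ x)).toENNRealVectorMeasure ∧
    MemLp (ν'.rnDeriv (μ.bind (fun x => κ x))) 2 (μ.bind (fun x => κ x)) ∧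
    ∫ y, (ν'.rnDeriv (μ.bind (fun x => κ x)) y) ^ 2 ∂(μ.bind (fun x => κ x))
      ≤ ∫ x, (h x) ^ 2 ∂μ := by
  set μ' := μ.bind (fun x => κ x) with hμ'def
  haveI hPμ' : IsProbabilityMeasure μ' := auxFM_isProbabilityMeasure_bind κ μ
  have hinth : Integrable h μ := hL2.integrable one_le_two
  -- kernel a.e. vanishing on μ'-null sets
  have hker : ∀ B : Set Y, MeasurableSet B → μ' B = 0 → ∀ᵐ x ∂μ, κ x B = 0 := by
    intro B hB hB0
    rw [hμ'def, Measure.bind_apply hB κ.measurable.aemeasurable] at hB0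
    exact (lintegral_eq_zero_iff (κ.measurable_coe hB)).1 hB0
  -- absolute continuity
  have hac : ν' ≪ᵥ μ'.toENNRealVectorMeasure := by
    refine VectorMeasure.AbsolutelyContinuous.mk fun B hB hB0 => ?_
    rw [Measure.toENNRealVectorMeasure_apply_measurable hB] at hB0
    have h0 : (fun x => ((κ x) B).toReal * h x) =ᵐ[μ] fun _ => (0:ℝ) :=
      (hker B hB hB0).mono fun x hx => by simp [hx]
    rw [hν' B hB, integral_congr_ae h0]
    simp
  -- positive and negative density measures
  set mp : Measure X := μ.withDensity (fun x => ENNReal.ofReal (h x)) with hmp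
  set mm : Measure X := μ.withDensity (fun x => ENNReal.ofReal (-h x)) with hmm
  haveI : IsFiniteMeasure mp := isFiniteMeasure_withDensity_ofReal hinth.2
  haveI : IsFiniteMeasure mm := isFiniteMeasure_withDensity_ofReal hinth.neg.2
  set ρp : Measure Y := mp.bind (fun x => κ x) with hρp
  set ρm : Measure Y := mm.bind (fun x => κ x) with hρm
  haveI : IsFiniteMeasure ρp := auxFM_isFiniteMeasure_bind κ mp
  haveI : IsFiniteMeasure ρm := auxFM_isFiniteMeasure_bind κ mm
  have hacp : ρp ≪ μ' := by
    refine Measure.AbsolutelyContinuous.mk fun B hB hB0 => ?_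
    have h0 : ∀ᵐ x ∂mp, κ x B = 0 :=
      (hker B hB hB0).filter_mono (withDensity_absolutelyContinuous μ _).ae_le
    rw [hρp, Measure.bind_apply hB κ.measurable.aemeasurable, lintegral_congr_ae h0, lintegral_zero]
  have hacm : ρm ≪ μ' := by
    refine Measure.AbsolutelyContinuous.mk fun B hB hB0 => ?_
    have h0 : ∀ᵐ x ∂mm, κ x B = 0 :=
      (hker B hB hB0).filter_mono (withDensity_absolutelyContinuous μ _).ae_le
    rw [hρm, Measure.bind_apply hB κ.measurable.aemeasurable, lintegral_congr_ae h0, lintegral_zero]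
  -- toReal of kernel measure bounded by 1
  have hκ1 : ∀ (x : X) (B : Set Y), ((κ x) B).toReal ≤ 1 := fun x B => by
    simpa using ENNReal.toReal_mono ENNReal.one_ne_top prob_le_one
  have hκabs : ∀ (x : X) (B : Set Y), |((κ x) B).toReal| ≤ 1 := fun x B => by
    rw [abs_of_nonneg ENNReal.toReal_nonneg]; exact hκ1 x B
  -- measurability of x ↦ (κ x B).toReal
  have hκmeas : ∀ (B : Set Y), MeasurableSet B → Measurable fun x => ((κ x) B).toReal :=
    fun B hB => (κ.measurable_coe hB).ennreal_toReal
  -- integrability of products with h-parts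
  have hp_int : Integrable (fun x => max (h x) 0) μ := hinth.pos_part
  have hm_int : Integrable (fun x => max (-h x) 0) μ := hinth.neg.pos_part
  -- set identity for ρp
  have hsetρp : ∀ B : Set Y, MeasurableSet B →
      (ρp B).toReal = ∫ x, ((κ x) B).toReal * max (h x) 0 ∂μ := by
    intro B hB
    have hint_pB : Integrable (fun x => ((κ x) B).toReal * max (h x) 0) μ :=
      hp_int.bdd_mul (hκmeas B hB).aestronglyMeasurable
        (Eventually.of_forall fun x => by rw [Real.norm_eq_abs]; exact hκabs x B)
    have hofReal : ENNReal.ofReal (∫ x, ((κ x) B).toReal * max (h x) 0 ∂μ) = ρp B := by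
      rw [ofReal_integral_eq_lintegral_ofReal hint_pB
        (Eventually.of_forall fun x => mul_nonneg ENNReal.toReal_nonneg (le_max_right _ _))]
      rw [hρp, Measure.bind_apply hB κ.measurable.aemeasurable, hmp,
        lintegral_withDensity_eq_lintegral_mul μ hmeas.ennreal_ofReal (κ.measurable_coe hB)]
      refine lintegral_congr fun x => ?_
      rw [ENNReal.ofReal_mul ENNReal.toReal_nonneg, ENNReal.ofReal_toReal (measure_ne_top _ _)]
      rw [Pi.mul_apply, mul_comm]
      congr 1
      rcases le_total 0 (h x) with hx | hx
      · rw [max_eq_left hx]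
      · rw [max_eq_right hx, ENNReal.ofReal_of_nonpos hx, ENNReal.ofReal_zero]
    rw [← hofReal, ENNReal.toReal_ofReal
      (integral_nonneg fun x => mul_nonneg ENNReal.toReal_nonneg (le_max_right _ _))]
  -- set identity for ρm
  have hsetρm : ∀ B : Set Y, MeasurableSet B →
      (ρm B).toReal = ∫ x, ((κ x) B).toReal * max (-h x) 0 ∂μ := by
    intro B hB
    have hint_mB : Integrable (fun x => ((κ x) B).toReal * max (-h x) 0) μ :=
      hm_int.bdd_mul (hκmeas B hB).aestronglyMeasurable
        (Eventually.of_forall fun x => by rw [Real.norm_eq_abs]; exact hκabs x B)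
    have hofReal : ENNReal.ofReal (∫ x, ((κ x) B).toReal * max (-h x) 0 ∂μ) = ρm B := by
      rw [ofReal_integral_eq_lintegral_ofReal hint_mB
        (Eventually.of_forall fun x => mul_nonneg ENNReal.toReal_nonneg (le_max_right _ _))]
      rw [hρm, Measure.bind_apply hB κ.measurable.aemeasurable, hmm,
        lintegral_withDensity_eq_lintegral_mul μ (f := fun x => ENNReal.ofReal (-h x)) hmeas.neg.ennreal_ofReal (κ.measurable_coe hB)]
      refine lintegral_congr fun x => ?_
      rw [ENNReal.ofReal_mul ENNReal.toReal_nonneg, ENNReal.ofReal_toReal (measure_ne_top _ _)]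
      rw [Pi.mul_apply, mul_comm]
      congr 1
      rcases le_total 0 (-h x) with hx | hx
      · rw [max_eq_left hx]
      · rw [max_eq_right hx, ENNReal.ofReal_of_nonpos hx, ENNReal.ofReal_zero]
    rw [← hofReal, ENNReal.toReal_ofReal
      (integral_nonneg fun x => mul_nonneg ENNReal.toReal_nonneg (le_max_right _ _))]
  have hmaxsplit : ∀ r : ℝ, max r 0 - max (-r) 0 = r := fun r => by
    rcases le_total 0 r with hr | hr
    · rw [max_eq_left hr, max_eq_right (by linarith)]; ring
    · rw [max_eq_right hr, max_eq_left (by linarith)]; ring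
  -- set identity for ν'
  have hsetν : ∀ B : Set Y, MeasurableSet B →
      ν' B = (ρp B).toReal - (ρm B).toReal := by
    intro B hB
    have hint_pB : Integrable (fun x => ((κ x) B).toReal * max (h x) 0) μ :=
      hp_int.bdd_mul (hκmeas B hB).aestronglyMeasurable
        (Eventually.of_forall fun x => by rw [Real.norm_eq_abs]; exact hκabs x B)
    have hint_mB : Integrable (fun x => ((κ x) B).toReal * max (-h x) 0) μ :=
      hm_int.bdd_mul (hκmeas B hB).aestronglyMeasurable
        (Eventually.of_forall fun x => by rw [Real.norm_eq_abs]; exact hκabs x B)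
    rw [hν' B hB, hsetρp B hB, hsetρm B hB, ← integral_sub hint_pB hint_mB]
    refine integral_congr_ae (Eventually.of_forall fun x => ?_)
    dsimp only
    rw [← mul_sub, hmaxsplit]
  -- the Radon-Nikodym derivative
  haveI : SigmaFinite μ' := inferInstance
  have hgmeas : Measurable (ν'.rnDeriv μ') := SignedMeasure.measurable_rnDeriv ν' μ'
  have hgint : Integrable (ν'.rnDeriv μ') μ' := SignedMeasure.integrable_rnDeriv ν' μ'
  have hwd : μ'.withDensityᵥ (ν'.rnDeriv μ') = ν' :=
    SignedMeasure.withDensityᵥ_rnDeriv_eq ν' μ' hac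
  set g := ν'.rnDeriv μ' with hgdef
  have hsetg : ∀ B : Set Y, MeasurableSet B → ∫ y in B, g y ∂μ' = ν' B := fun B hB => by
    conv_rhs => rw [← hwd]
    rw [withDensityᵥ_apply hgint hB]
  set p := fun y => (ρp.rnDeriv μ' y).toReal with hpdef
  set q := fun y => (ρm.rnDeriv μ' y).toReal with hqdef
  have hpint : Integrable p μ' := Measure.integrable_toReal_rnDeriv
  have hqint : Integrable q μ' := Measure.integrable_toReal_rnDeriv
  have hgae : g =ᵐ[μ'] fun y => p y - q y := by
    refine Integrable.ae_eq_of_forall_setIntegral_eq _ _ hgint (hpint.sub hqint)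
      fun B hB _ => ?_
    rw [hsetg B hB, hsetν B hB]
    have : ∫ y in B, (fun y => p y - q y) y ∂μ' = (∫ y in B, p y ∂μ') - ∫ y in B, q y ∂μ' :=
      integral_sub hpint.integrableOn hqint.integrableOn
    rw [this, hpdef, hqdef, Measure.setIntegral_toReal_rnDeriv hacp B,
      Measure.setIntegral_toReal_rnDeriv hacm B]
    rfl
  -- the key identity
  have hkey : ∀ (φ : Y → ℝ), Measurable φ → ∀ C : ℝ, (∀ y, |φ y| ≤ C) →
      ∫ y, φ y * g y ∂μ' = ∫ x, (∫ y, φ y ∂κ x) * h x ∂μ := by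
    intro φ hφ C hC
    have hφs : AEStronglyMeasurable φ μ' := hφ.aestronglyMeasurable
    have hbdd : ∃ C', ∀ y, ‖φ y‖ ≤ C' := ⟨C, fun y => by
      rw [Real.norm_eq_abs]; exact hC y⟩
    have h1 : ∫ y, φ y * g y ∂μ' = ∫ y, φ y * (p y - q y) ∂μ' :=
      integral_congr_ae (hgae.mono fun y hy => by dsimp only; rw [hy])
    have h2 : ∫ y, φ y * (p y - q y) ∂μ' = (∫ y, φ y * p y ∂μ') - ∫ y, φ y * q y ∂μ' := by
      have e : (fun y => φ y * (p y - q y)) =ᵐ[μ'] fun y => φ y * p y - φ y * q y :=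
        Eventually.of_forall fun y => by ring
      rw [integral_congr_ae e, integral_sub (hpint.bdd_mul hφs (Eventually.of_forall hbdd.choose_spec)) (hqint.bdd_mul hφs (Eventually.of_forall hbdd.choose_spec))]
    have h3p : ∫ y, φ y * p y ∂μ' = ∫ y, φ y ∂ρp := by
      rw [← integral_rnDeriv_smul hacp (f := φ)]
      refine integral_congr_ae (Eventually.of_forall fun y => ?_)
      dsimp only
      rw [smul_eq_mul]
      exact mul_comm _ _
    have h3m : ∫ y, φ y * q y ∂μ' = ∫ y, φ y ∂ρm := by
      rw [← integral_rnDeriv_smul hacm (f := φ)]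
      refine integral_congr_ae (Eventually.of_forall fun y => ?_)
      dsimp only
      rw [smul_eq_mul]
      exact mul_comm _ _
    have h4p : ∫ y, φ y ∂ρp = ∫ x, (∫ y, φ y ∂κ x) * max (h x) 0 ∂μ := by
      rw [hρp, auxFM_integral_bind κ mp hφ hC, hmp]
      have he : μ.withDensity (fun x => ENNReal.ofReal (h x))
          = μ.withDensity (fun x => ((Real.toNNReal (h x) : ℝ≥0) : ℝ≥0∞)) := rfl
      rw [he, integral_withDensity_eq_integral_smul (f := fun x => Real.toNNReal (h x)) (measurable_real_toNNReal.comp hmeas) _]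
      refine integral_congr_ae (Eventually.of_forall fun x => ?_)
      dsimp only
      rw [NNReal.smul_def, Real.coe_toNNReal']
      exact mul_comm _ _
    have h4m : ∫ y, φ y ∂ρm = ∫ x, (∫ y, φ y ∂κ x) * max (-h x) 0 ∂μ := by
      rw [hρm, auxFM_integral_bind κ mm hφ hC, hmm]
      have he : μ.withDensity (fun x => ENNReal.ofReal (-h x))
          = μ.withDensity (fun x => ((Real.toNNReal (-h x) : ℝ≥0) : ℝ≥0∞)) := rfl
      rw [he, integral_withDensity_eq_integral_smul (f := fun x => Real.toNNReal (-h x)) (measurable_real_toNNReal.comp hmeas.neg) _]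
      refine integral_congr_ae (Eventually.of_forall fun x => ?_)
      dsimp only
      rw [NNReal.smul_def, Real.coe_toNNReal']
      exact mul_comm _ _
    have hGmeas : Measurable fun x => ∫ y, φ y ∂κ x := auxFM_measurable_kernel_integral κ hφ
    have hGbdd : ∃ C', ∀ x, ‖∫ y, φ y ∂κ x‖ ≤ C' := by
      refine ⟨max C 0, fun x => ?_⟩
      rw [Real.norm_eq_abs]
      calc |∫ y, φ y ∂κ x| ≤ ∫ y, |φ y| ∂κ x := by
            simpa [Real.norm_eq_abs] using norm_integral_le_integral_norm (μ := κ x) φ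
        _ ≤ ∫ _, max C 0 ∂κ x :=
            integral_mono (auxFM_integrable_of_bdd hφ.abs.aestronglyMeasurable
              (C := max C 0) fun y => by
                rw [abs_abs]; exact (hC y).trans (le_max_left _ _))
              (integrable_const _) fun y => (hC y).trans (le_max_left _ _)
        _ = max C 0 := by simp
    have h5 : (∫ x, (∫ y, φ y ∂κ x) * max (h x) 0 ∂μ)
        - (∫ x, (∫ y, φ y ∂κ x) * max (-h x) 0 ∂μ) = ∫ x, (∫ y, φ y ∂κ x) * h x ∂μ := by
      rw [← integral_sub (hp_int.bdd_mul hGmeas.aestronglyMeasurable (Eventually.of_forall hGbdd.choose_spec))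
        (hm_int.bdd_mul hGmeas.aestronglyMeasurable (Eventually.of_forall hGbdd.choose_spec))]
      refine integral_congr_ae (Eventually.of_forall fun x => ?_)
      dsimp only
      rw [← mul_sub, hmaxsplit]
    rw [h1, h2, h3p, h3m, h4p, h4m, h5]
  -- the quantitative bound for truncations
  set Ch := ∫ x, h x ^ 2 ∂μ with hChdef
  have hCh0 : 0 ≤ Ch := integral_nonneg fun x => sq_nonneg _
  have h2int : Integrable (fun x => h x ^ 2) μ := hL2.integrable_sq
  have main_n : ∀ n : ℕ, ∫ y, (max (-(n:ℝ)) (min (g y) (n:ℝ))) ^ 2 ∂μ' ≤ Ch := by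
    intro n
    set gn := fun y => max (-(n:ℝ)) (min (g y) (n:ℝ)) with hgndef
    have hgnmeas : Measurable gn := measurable_const.max (hgmeas.min measurable_const)
    have hn0 : (0:ℝ) ≤ n := Nat.cast_nonneg n
    have hgnbdd : ∀ y, |gn y| ≤ (n:ℝ) := fun y =>
      abs_le.2 ⟨le_max_left _ _, max_le (by linarith) (min_le_right _ _)⟩
    have hgn2bdd : ∀ y, |gn y ^ 2| ≤ (n:ℝ) ^ 2 := fun y => by
      rw [abs_pow]; exact pow_le_pow_left₀ (abs_nonneg _) (hgnbdd y) 2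
    have hgn2meas : Measurable fun y => gn y ^ 2 := hgnmeas.pow_const 2
    have hgn2int : Integrable (fun y => gn y ^ 2) μ' :=
      auxFM_integrable_of_bdd hgn2meas.aestronglyMeasurable hgn2bdd
    -- step 1 : ∫ gn² ≤ ∫ gn·g
    have hstep1 : ∫ y, gn y ^ 2 ∂μ' ≤ ∫ y, gn y * g y ∂μ' := by
      refine integral_mono hgn2int (hgint.bdd_mul hgnmeas.aestronglyMeasurable
        (Eventually.of_forall fun y => by rw [Real.norm_eq_abs]; exact hgnbdd y)) fun y => ?_
      rcases le_total 0 (g y) with hy | hy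
      · have h1 : gn y = min (g y) (n:ℝ) := max_eq_right ((by linarith : -(n:ℝ) ≤ 0).trans
          (le_min hy hn0))
        have h2 : gn y ≤ g y := h1 ▸ min_le_left _ _
        have h3 : 0 ≤ gn y := h1 ▸ le_min hy hn0
        nlinarith
      · have h1 : min (g y) (n:ℝ) = g y := min_eq_left (by linarith)
        have h2 : g y ≤ gn y := by rw [hgndef]; dsimp only; rw [h1]; exact le_max_right _ _
        have h3 : gn y ≤ 0 := by rw [hgndef]; dsimp only; rw [h1]; exact max_le (by linarith) hy
        nlinarith
    -- step 2 : ∫ gn·g = ∫ Gn·h  (key identity)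
    have hstep2 : ∫ y, gn y * g y ∂μ' = ∫ x, (∫ y, gn y ∂κ x) * h x ∂μ :=
      hkey gn hgnmeas n hgnbdd
    -- facts about Gn
    have hGnmeas : Measurable fun x => ∫ y, gn y ∂κ x := auxFM_measurable_kernel_integral κ hgnmeas
    have hGnbdd : ∀ x, |∫ y, gn y ∂κ x| ≤ (n:ℝ) := fun x => by
      calc |∫ y, gn y ∂κ x| ≤ ∫ y, |gn y| ∂κ x := by
            simpa [Real.norm_eq_abs] using norm_integral_le_integral_norm (μ := κ x) gn
        _ ≤ ∫ _, (n:ℝ) ∂κ x :=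
            integral_mono (auxFM_integrable_of_bdd hgnmeas.abs.aestronglyMeasurable
              (C := (n:ℝ)) fun y => by rw [abs_abs]; exact hgnbdd y)
              (integrable_const _) hgnbdd
        _ = n := by simp
    have hGn2meas : Measurable fun x => (∫ y, gn y ∂κ x) ^ 2 := hGnmeas.pow_const 2
    have hGn2int : Integrable (fun x => (∫ y, gn y ∂κ x) ^ 2) μ :=
      auxFM_integrable_of_bdd hGn2meas.aestronglyMeasurable (C := (n:ℝ) ^ 2) fun x => by
        rw [abs_pow]; exact pow_le_pow_left₀ (abs_nonneg _) (hGnbdd x) 2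
    have hGh_int : Integrable (fun x => (∫ y, gn y ∂κ x) * h x) μ :=
      hinth.bdd_mul hGnmeas.aestronglyMeasurable
        (Eventually.of_forall fun x => by rw [Real.norm_eq_abs]; exact hGnbdd x)
    -- step 3 : Jensen, ∫ Gn² dμ ≤ ∫ gn² dμ'
    have hstep3 : ∫ x, (∫ y, gn y ∂κ x) ^ 2 ∂μ ≤ ∫ y, gn y ^ 2 ∂μ' := by
      rw [hμ'def, auxFM_integral_bind κ μ hgn2meas hgn2bdd]
      refine integral_mono hGn2int
        (auxFM_integrable_of_bdd (auxFM_measurable_kernel_integral κ hgn2meas).aestronglyMeasurable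
          (C := (n:ℝ)^2) fun x => ?_) fun x => auxFM_jensen hgnmeas hgnbdd
      rw [abs_of_nonneg (integral_nonneg fun y => sq_nonneg _)]
      calc ∫ y, gn y ^ 2 ∂κ x ≤ ∫ _, (n:ℝ)^2 ∂κ x :=
            integral_mono (auxFM_integrable_of_bdd hgn2meas.aestronglyMeasurable hgn2bdd)
              (integrable_const _) fun y => (le_abs_self _).trans (hgn2bdd y)
        _ = (n:ℝ)^2 := by simp
    -- step 4 : Cauchy-Schwarz  B² ≤ Ch * A
    have hquad : ∀ t : ℝ, 0 ≤ Ch * (t * t)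
        + (-2 * (∫ x, (∫ y, gn y ∂κ x) * h x ∂μ)) * t + ∫ x, (∫ y, gn y ∂κ x) ^ 2 ∂μ := by
      intro t
      have h0 : 0 ≤ ∫ x, (t * h x - (∫ y, gn y ∂κ x)) ^ 2 ∂μ :=
        integral_nonneg fun x => sq_nonneg _
      have hsub : Integrable (fun x => (t * t) * h x ^ 2
          - (2 * t) * ((∫ y, gn y ∂κ x) * h x)) μ :=
        (h2int.const_mul (t * t)).sub (hGh_int.const_mul (2 * t))
      have e : (fun x => (t * h x - (∫ y, gn y ∂κ x)) ^ 2) =ᵐ[μ] fun x =>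
          ((t * t) * h x ^ 2 - (2 * t) * ((∫ y, gn y ∂κ x) * h x)) + (∫ y, gn y ∂κ x) ^ 2 :=
        Eventually.of_forall fun x => by ring
      rw [integral_congr_ae e, integral_add hsub hGn2int,
        integral_sub (h2int.const_mul (t * t)) (hGh_int.const_mul (2 * t)),
        integral_const_mul, integral_const_mul] at h0
      have := h0
      nlinarith [this]
    have hcs := discrim_le_zero hquad
    rw [discrim] at hcs
    -- conclude
    have hA := hstep3
    have hB := hstep1.trans_eq hstep2
    have han0 : 0 ≤ ∫ y, gn y ^ 2 ∂μ' := integral_nonneg fun y => sq_nonneg _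
    nlinarith [hA, hB, hcs, han0, hCh0]
  -- monotone convergence
  have hclamp_abs : ∀ (a : ℝ) (y : Y), 0 ≤ a →
      |max (-a) (min (g y) a)| = min |g y| a := by
    intro a y ha
    rcases le_total 0 (g y) with hy | hy
    · rw [max_eq_right ((by linarith : -a ≤ 0).trans (le_min hy ha)),
        abs_of_nonneg (le_min hy ha), abs_of_nonneg hy]
    · rw [min_eq_left (by linarith), abs_of_nonpos (max_le (by linarith) hy),
        abs_of_nonpos hy]
      rcases le_total (-a) (g y) with hz | hz
      · rw [max_eq_right hz, min_eq_left (by linarith)]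
      · rw [max_eq_left hz, min_eq_right (by linarith), neg_neg]
  have hmono : Monotone fun (n : ℕ) (y : Y) =>
      ENNReal.ofReal ((max (-(n:ℝ)) (min (g y) (n:ℝ))) ^ 2) := by
    intro a b hab
    intro y
    refine ENNReal.ofReal_le_ofReal ?_
    have h1 : |max (-(a:ℝ)) (min (g y) (a:ℝ))| ≤ |max (-(b:ℝ)) (min (g y) (b:ℝ))| := by
      rw [hclamp_abs a y (Nat.cast_nonneg a), hclamp_abs b y (Nat.cast_nonneg b)]
      exact min_le_min le_rfl (Nat.cast_le.2 hab)
    calc (max (-(a:ℝ)) (min (g y) (a:ℝ))) ^ 2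
        = |max (-(a:ℝ)) (min (g y) (a:ℝ))| ^ 2 := (sq_abs _).symm
      _ ≤ |max (-(b:ℝ)) (min (g y) (b:ℝ))| ^ 2 := pow_le_pow_left₀ (abs_nonneg _) h1 2
      _ = (max (-(b:ℝ)) (min (g y) (b:ℝ))) ^ 2 := sq_abs _
  have hsup : ∀ y, (⨆ n : ℕ, ENNReal.ofReal ((max (-(n:ℝ)) (min (g y) (n:ℝ))) ^ 2))
      = ENNReal.ofReal (g y ^ 2) := by
    intro y
    apply le_antisymm
    · refine iSup_le fun n => ENNReal.ofReal_le_ofReal ?_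
      calc (max (-(n:ℝ)) (min (g y) (n:ℝ))) ^ 2
          = |max (-(n:ℝ)) (min (g y) (n:ℝ))| ^ 2 := (sq_abs _).symm
        _ ≤ |g y| ^ 2 := pow_le_pow_left₀ (abs_nonneg _) (by
            rw [hclamp_abs _ y (Nat.cast_nonneg n)]; exact min_le_left _ _) 2
        _ = g y ^ 2 := sq_abs _
    · have hN : |g y| ≤ ((⌈|g y|⌉₊ : ℕ) : ℝ) := Nat.le_ceil _
      have h1 : min (g y) ((⌈|g y|⌉₊ : ℕ) : ℝ) = g y :=
        min_eq_left ((le_abs_self _).trans hN)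
      have h2 : max (-(((⌈|g y|⌉₊ : ℕ) : ℝ))) (g y) = g y := by
        refine max_eq_right ?_
        have := neg_abs_le (g y)
        linarith
      have : ENNReal.ofReal ((max (-(((⌈|g y|⌉₊ : ℕ) : ℝ)))
          (min (g y) (((⌈|g y|⌉₊ : ℕ) : ℝ)))) ^ 2) = ENNReal.ofReal (g y ^ 2) := by
        rw [h1, h2]
      exact this ▸ le_iSup (fun n : ℕ =>
        ENNReal.ofReal ((max (-(n:ℝ)) (min (g y) (n:ℝ))) ^ 2)) ⌈|g y|⌉₊
  have hlint : ∫⁻ y, ENNReal.ofReal (g y ^ 2) ∂μ' ≤ ENNReal.ofReal Ch := by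
    rw [lintegral_congr fun y => (hsup y).symm,
      lintegral_iSup
        (f := fun (n : ℕ) (y : Y) => ENNReal.ofReal ((max (-(n:ℝ)) (min (g y) (n:ℝ))) ^ 2))
        (fun n => ((measurable_const.max (hgmeas.min measurable_const)).pow_const
          2).ennreal_ofReal) hmono]
    refine iSup_le fun n => ?_
    have hgnmeas : Measurable fun y => max (-(n:ℝ)) (min (g y) (n:ℝ)) :=
      measurable_const.max (hgmeas.min measurable_const)
    have hgn2int : Integrable (fun y => (max (-(n:ℝ)) (min (g y) (n:ℝ))) ^ 2) μ' := by
      refine auxFM_integrable_of_bdd (hgnmeas.pow_const 2).aestronglyMeasurable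
        (C := (n:ℝ)^2) fun y => ?_
      rw [abs_pow]
      refine pow_le_pow_left₀ (abs_nonneg _) (abs_le.2 ⟨le_max_left _ _,
        max_le (by have : (0:ℝ) ≤ n := Nat.cast_nonneg n; linarith) (min_le_right _ _)⟩) 2
    rw [← ofReal_integral_eq_lintegral_ofReal hgn2int
      (Eventually.of_forall fun y => sq_nonneg _)]
    exact ENNReal.ofReal_le_ofReal (main_n n)
  have hfin : ∫⁻ y, (‖g y‖₊ : ℝ≥0∞) ^ (2:ℝ) ∂μ' < ⊤ := by
    have e : ∀ y, (‖g y‖₊ : ℝ≥0∞) ^ (2:ℝ) = ENNReal.ofReal (g y ^ 2) := fun y => by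
      rw [ENNReal.rpow_two, ← enorm_eq_nnnorm, Real.enorm_eq_ofReal_abs, ← ENNReal.ofReal_pow (abs_nonneg _), sq_abs]
    rw [lintegral_congr e]
    exact lt_of_le_of_lt hlint ENNReal.ofReal_lt_top
  have hmem : MemLp g 2 μ' := by
    refine ⟨hgmeas.aestronglyMeasurable, ?_⟩
    rw [eLpNorm_eq_lintegral_rpow_enorm_toReal two_ne_zero ENNReal.ofNat_ne_top]
    have h2r : (2 : ℝ≥0∞).toReal = (2:ℝ) := by simp
    rw [h2r]
    exact ENNReal.rpow_lt_top_of_nonneg (by norm_num) hfin.ne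
  refine ⟨hac, hmem, ?_⟩
  have hintrep : ∫ y, g y ^ 2 ∂μ' = (∫⁻ y, ENNReal.ofReal (g y ^ 2) ∂μ').toReal :=
    integral_eq_lintegral_of_nonneg_ae (Eventually.of_forall fun y => sq_nonneg _)
      (hgmeas.pow_const 2).aestronglyMeasurable
  rw [hintrep]
  calc (∫⁻ y, ENNReal.ofReal (g y ^ 2) ∂μ').toReal
      ≤ (ENNReal.ofReal Ch).toReal := ENNReal.toReal_mono ENNReal.ofReal_ne_top hlint
    _ = Ch := ENNReal.toReal_ofReal hCh0
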